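/- Every cycle C_n of even length with n ≡ 2 (mod 4) admits a locally irregular edge coloring with 3 colors but not with 2 colors. -/

import Mathlib

open Finset SimpleGraph

/-- Degree of `v` in the color class `k` of the edge coloring `c` of `G`. -/
def degIn {V K : Type*} [Fintype V] (G : SimpleGraph V) [DecidableRel G.Adj] [DecidableEq K]
    (c : Sym2 V → K) (k : K) (v : V) : ℕ :=
  (Finset.univ.filter fun w => G.Adj v w ∧ c s(v, w) = k).card

/-- `c` is a locally irregular edge coloring of the simple graph `G`. -/
def IsLIC {V K : Type*} [Fintype V] (G : SimpleGraph V) [DecidableRel G.Adj] [DecidableEq K]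
    (c : Sym2 V → K) : Prop :=
  ∀ v w, G.Adj v w → degIn G c (c s(v, w)) v ≠ degIn G c (c s(v, w)) w

/-- In the 2-multigraph `²G`, each edge of `G` carries a pair of colors (one for each
parallel copy).  `degIn2 G c k v` is the degree of `v` in the color class `k`. -/
def degIn2 {V K : Type*} [Fintype V] (G : SimpleGraph V) [DecidableRel G.Adj] [DecidableEq K]
    (c : Sym2 V → K × K) (k : K) (v : V) : ℕ :=
  ∑ w ∈ Finset.univ.filter (fun w => G.Adj v w),
    ((if (c s(v, w)).1 = k then 1 else 0) + (if (c s(v, w)).2 = k then 1 else 0))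

/-- `c` is a locally irregular edge coloring of the 2-multigraph `²G`. -/
def IsLIC2 {V K : Type*} [Fintype V] (G : SimpleGraph V) [DecidableRel G.Adj] [DecidableEq K]
    (c : Sym2 V → K × K) : Prop :=
  ∀ v w, G.Adj v w → ∀ k : K, ((c s(v, w)).1 = k ∨ (c s(v, w)).2 = k) →
    degIn2 G c k v ≠ degIn2 G c k w

instance {n : ℕ} : DecidableRel (SimpleGraph.pathGraph n).Adj := fun _ _ =>
  decidable_of_iff _ (SimpleGraph.pathGraph_adj).symm

/-! ### Auxiliary material -/

/-- color of edge number `i` (the edge from vertex `i` to `i+1`) in the cycle `C_n`. -/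
def Fc (n i : ℕ) : Fin 3 :=
  if i / 2 = n / 2 - 1 then 2 else if (i / 2) % 2 = 0 then 0 else 1

lemma adj_cycle (m : ℕ) (v w : Fin (m + 3)) :
    (cycleGraph (m+3)).Adj v w ↔ w = v + 1 ∨ w = v - 1 := by
  have h : (cycleGraph (m+3)).Adj v w ↔ v - w = 1 ∨ w - v = 1 := cycleGraph_adj
  rw [h]
  constructor
  · rintro (h | h)
    · right; rw [← h]; open Fin.CommRing in ring
    · left; rw [← h]; open Fin.CommRing in ring
  · rintro (h | h)
    · right; rw [h]; open Fin.CommRing in ring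
    · left; rw [h]; open Fin.CommRing in ring

lemma adj_succ (m : ℕ) (v : Fin (m + 3)) : (cycleGraph (m+3)).Adj v (v+1) :=
  (adj_cycle m v (v+1)).mpr (Or.inl rfl)

lemma ne_pm (m : ℕ) (v : Fin (m + 3)) : v + 1 ≠ v - 1 := by
  intro h
  have h2 : (2 : Fin (m+3)) = 0 := by
    have := sub_eq_zero_of_eq h
    rw [← this]; open Fin.CommRing in ring
  have h3 : (2 : Fin (m+3)).val = 2 % (m+3) := rfl
  rw [h2, Nat.mod_eq_of_lt (by omega)] at h3
  simp at h3

lemma two_ne (m : ℕ) (a : Fin (m+3)) : ¬ (a = a + 1 + 1) := by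
  intro h
  have h2 : (2 : Fin (m+3)) = 0 := by
    have := sub_eq_zero_of_eq h.symm
    rw [← this]; open Fin.CommRing in ring
  have h3 : (2 : Fin (m+3)).val = 2 % (m+3) := rfl
  rw [h2, Nat.mod_eq_of_lt (by omega)] at h3
  simp at h3

lemma degIn_cycle {K : Type*} [DecidableEq K] (m : ℕ) (c : Sym2 (Fin (m+3)) → K) (k : K)
    (v : Fin (m+3)) :
    degIn (cycleGraph (m+3)) c k v =
      (if c s(v, v+1) = k then 1 else 0) + (if c s(v, v-1) = k then 1 else 0) := by
  unfold degIn
  have h1 : (Finset.univ.filter fun w => (cycleGraph (m+3)).Adj v w ∧ c s(v, w) = k)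
      = ({v+1, v-1} : Finset (Fin (m+3))).filter (fun w => c s(v, w) = k) := by
    ext w
    simp [adj_cycle, and_comm, or_comm]
  rw [h1, Finset.card_filter, Finset.sum_pair (ne_pm m v)]

lemma val_add_one (m : ℕ) (v : Fin (m+3)) :
    (v + 1).val = if v.val = m + 2 then 0 else v.val + 1 := by
  rw [Fin.add_def]
  show (v.val + 1) % (m+3) = _
  split_ifs with h
  · rw [h]; exact Nat.mod_self _
  · exact Nat.mod_eq_of_lt (by omega)

lemma val_sub_one (m : ℕ) (v : Fin (m+3)) :
    (v - 1).val = if v.val = 0 then m + 2 else v.val - 1 := by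
  rw [Fin.sub_def]
  show ((m + 3) - 1 + v.val) % (m+3) = _
  split_ifs with h
  · rw [h]; exact Nat.mod_eq_of_lt (by omega)
  · rw [show (m+3) - 1 + v.val = (m+3) + (v.val - 1) by omega, Nat.add_mod_left]
    exact Nat.mod_eq_of_lt (by omega)

set_option maxHeartbeats 2000000 in
lemma keyF (k i : ℕ) (hk : 1 ≤ k) (hi : i < 4*k+2) :
    (if Fc (4*k+2) (if i = 0 then 4*k+1 else i-1) = Fc (4*k+2) i then 1 else 0) ≠
    (if Fc (4*k+2) (if i = 4*k+1 then 0 else i+1) = Fc (4*k+2) i then (1:ℕ) else 0) := by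
  have hn2 : (4*k+2)/2 - 1 = 2*k := by omega
  unfold Fc
  rw [hn2]
  split_ifs <;> omega

def gfun (m : ℕ) : Fin (m+3) → Fin (m+3) → Fin 3 := fun a b =>
  if b = a + 1 then Fc (m+3) a.val else if a = b + 1 then Fc (m+3) b.val else 0

lemma gfun_symm (m : ℕ) : ∀ a b : Fin (m+3), gfun m a b = gfun m b a := by
  intro a b
  unfold gfun
  by_cases h1 : b = a + 1 <;> by_cases h2 : a = b + 1
  · exact absurd (by rw [h1] at h2; exact h2) (two_ne m a)
  · rw [if_pos h1, if_neg h2, if_pos h1]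
  · rw [if_neg h1, if_pos h2, if_pos h2]
  · rw [if_neg h1, if_neg h2, if_neg h2, if_neg h1]

/-- The explicit 3-coloring of the cycle. -/
def ccol (m : ℕ) : Sym2 (Fin (m+3)) → Fin 3 := Sym2.lift ⟨gfun m, gfun_symm m⟩

lemma ccol_edge (m : ℕ) (a : Fin (m+3)) : ccol m s(a, a+1) = Fc (m+3) a.val := by
  show gfun m a (a+1) = _
  unfold gfun
  rw [if_pos rfl]

lemma ccol_edge' (m : ℕ) (v : Fin (m+3)) : ccol m s(v, v - 1) = Fc (m+3) (v-1).val := by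
  have h := ccol_edge m (v - 1)
  rw [sub_add_cancel] at h
  rw [Sym2.eq_swap]
  exact h

lemma exist_aux (m k : ℕ) (hk : 1 ≤ k) (hkm : m + 3 = 4*k+2) (v : Fin (m+3)) :
    degIn (cycleGraph (m+3)) (ccol m) (Fc (m+3) v.val) v ≠
    degIn (cycleGraph (m+3)) (ccol m) (Fc (m+3) v.val) (v+1) := by
  rw [degIn_cycle, degIn_cycle, ccol_edge, ccol_edge', ccol_edge, ccol_edge']
  rw [if_pos rfl, show v + 1 - 1 = v from add_sub_cancel_right v 1, if_pos rfl]
  rw [val_sub_one, val_add_one]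
  obtain ⟨i, hilt, hvi⟩ : ∃ i, i < m+3 ∧ v.val = i := ⟨v.val, v.isLt, rfl⟩
  rw [hvi]
  have h2 : m + 2 = 4*k+1 := by omega
  rw [h2, hkm]
  have := keyF k i hk (by omega)
  omega

lemma exists_three (m : ℕ) (h4 : (m+3) % 4 = 2) :
    ∃ c : Sym2 (Fin (m+3)) → Fin 3, IsLIC (cycleGraph (m+3)) c := by
  obtain ⟨k, hk, hkm⟩ : ∃ k, 1 ≤ k ∧ m + 3 = 4*k+2 := ⟨(m+3)/4, by omega, by omega⟩
  refine ⟨ccol m, ?_⟩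
  intro v w hadj
  rw [adj_cycle] at hadj
  rcases hadj with rfl | rfl
  · rw [ccol_edge]
    exact exist_aux m k hk hkm v
  · rw [ccol_edge']
    have h := (exist_aux m k hk hkm (v-1)).symm
    rw [sub_add_cancel] at h
    exact h

lemma not_two (m : ℕ) (h4 : (m+3) % 4 = 2) :
    ¬ ∃ c : Sym2 (Fin (m+3)) → Fin 2, IsLIC (cycleGraph (m+3)) c := by
  rintro ⟨c, hc⟩
  set g : Fin (m+3) → Fin 2 := fun v => c s(v, v+1) with hg
  set d : Fin (m+3) → ZMod 2 := fun v => if g (v+1) = g v then 0 else 1 with hd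
  have e2 : ∀ v : Fin (m+3), c s(v, v-1) = g (v-1) := by
    intro v
    rw [hg]
    simp only []
    rw [sub_add_cancel, Sym2.eq_swap]
  have key : ∀ v : Fin (m+3), d (v - 1) + d v = 1 := by
    intro v
    have h := hc v (v+1) (adj_succ m v)
    rw [degIn_cycle, degIn_cycle] at h
    rw [e2, add_sub_cancel_right] at h
    rw [show c s(v+1, v) = c s(v, v+1) by rw [Sym2.eq_swap]] at h
    rw [show c s(v, v+1) = g v from rfl] at h
    rw [show c s(v+1, v+1+1) = g (v+1) from rfl] at h
    rw [if_pos rfl] at h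
    rw [hd]
    simp only []
    rw [sub_add_cancel]
    by_cases hA : g (v-1) = g v <;> by_cases hB : g (v+1) = g v
    · rw [if_pos hA, if_pos hB] at h; omega
    · rw [if_pos hA.symm, if_neg hB]; ring
    · rw [if_neg (fun hh => hA hh.symm), if_pos hB]; ring
    · rw [if_neg hA, if_neg hB] at h; omega
  have alt : ∀ v : Fin (m+3), d v = d 0 + (v.val : ZMod 2) := by
    have H : ∀ i (h : i < m+3), d ⟨i, h⟩ = d 0 + (i : ZMod 2) := by
      intro i
      induction i with
      | zero => intro h; show d 0 = d 0 + ((0:ℕ) : ZMod 2); simp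
      | succ i ih =>
        intro h
        have h1 : (⟨i+1, h⟩ : Fin (m+3)) - 1 = ⟨i, by omega⟩ := by
          apply Fin.ext
          rw [val_sub_one]
          simp
        have hk := key ⟨i+1, h⟩
        rw [h1, ih (by omega)] at hk
        have h2 : ∀ x : ZMod 2, x + x = 0 := fun x => CharTwo.add_self_eq_zero x
        push_cast
        linear_combination hk - h2 (d 0 + (i : ZMod 2))
    intro v
    have := H v.val v.isLt
    rwa [Fin.eta] at this
  have hsum0 : ∑ v : Fin (m+3), d v = 0 := by
    have hrw : ∀ v, d v = ((↑(g (v+1)).val : ZMod 2) - ↑(g v).val) := by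
      intro v
      rw [hd]
      simp only []
      by_cases hB : g (v+1) = g v
      · rw [if_pos hB, hB]; ring
      · rw [if_neg hB]
        have h1 : (g (v+1)).val < 2 := (g (v+1)).isLt
        have h2 : (g v).val < 2 := (g v).isLt
        have h3 : (g (v+1)).val ≠ (g v).val := fun hh => hB (Fin.ext hh)
        have h5 : ((g (v+1)).val = 0 ∧ (g v).val = 1) ∨ ((g (v+1)).val = 1 ∧ (g v).val = 0) := by
          omega
        rcases h5 with ⟨ha, hb⟩ | ⟨ha, hb⟩ <;> rw [ha, hb] <;> decide
    rw [Finset.sum_congr rfl (fun v _ => hrw v), Finset.sum_sub_distrib]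
    have heq : ∑ v : Fin (m+3), (↑(g (v+1)).val : ZMod 2) = ∑ v : Fin (m+3), ↑(g v).val :=
      Fintype.sum_equiv (Equiv.addRight 1) _ _ (fun v => rfl)
    rw [heq, sub_self]
  have hsum1 : ∑ v : Fin (m+3), d v = 1 := by
    rw [Finset.sum_congr rfl (fun v _ => alt v), Finset.sum_add_distrib,
      Finset.sum_const, Finset.card_univ, Fintype.card_fin]
    obtain ⟨k, hk, hkm⟩ : ∃ k, 1 ≤ k ∧ m + 3 = 4*k+2 := ⟨(m+3)/4, by omega, by omega⟩
    have hcast0 : ((m+3 : ℕ) : ZMod 2) = 0 := by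
      rw [← ZMod.natCast_mod (m+3) 2, show (m+3) % 2 = 0 by omega]
      exact Nat.cast_zero
    have hzero : (m+3) • d 0 = 0 := by
      rw [nsmul_eq_mul, hcast0, zero_mul]
    rw [hzero, zero_add]
    have hcast : ∑ v : Fin (m+3), ((v.val : ZMod 2)) = ((∑ v : Fin (m+3), v.val : ℕ) : ZMod 2) := by
      push_cast; rfl
    rw [hcast]
    have hval : ∑ v : Fin (m+3), v.val = ∑ i ∈ Finset.range (m+3), i :=
      Fin.sum_univ_eq_sum_range (fun i => i) (m+3)
    rw [hval, Finset.sum_range_id, hkm]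
    have hdiv : (4*k+2) * (4*k+2-1) / 2 = 2*(4*k*k+3*k) + 1 := by
      have hh : (4*k+2) * (4*k+2-1) = (2*(4*k*k+3*k) + 1) * 2 := by
        rw [show 4*k+2-1 = 4*k+1 by omega]; ring
      omega
    rw [hdiv]
    push_cast
    have : (2 : ZMod 2) = 0 := by decide
    rw [this]; ring
  rw [hsum0] at hsum1
  exact absurd hsum1 (by decide)

/-- Every cycle `C_n` with `n ≡ 2 (mod 4)` admits a locally irregular edge coloring with
3 colors but not with 2 colors. -/
theorem stmt_7 (n : ℕ) (hn : 3 ≤ n) (h4 : n % 4 = 2) :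
    (∃ c : Sym2 (Fin n) → Fin 3, IsLIC (cycleGraph n) c) ∧
    ¬ ∃ c : Sym2 (Fin n) → Fin 2, IsLIC (cycleGraph n) c := by
  obtain ⟨m, rfl⟩ : ∃ m, n = m + 3 := ⟨n - 3, by omega⟩
  exact ⟨exists_three m h4, not_two m h4⟩
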